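/- If a probability measure μ on a partially ordered measurable space satisfies the FKG inequality for increasing events, then for any bounded increasing measurable function g and bounded decreasing measurable function f, one has ∫ f·g dμ ≤ (∫ f dμ)·(∫ g dμ). -/
import Mathlib


open MeasureTheory

section aux

variable {Ω : Type*} [MeasurableSpace Ω] [PartialOrder Ω]

/-- FKG for a nonneg increasing function against an upper event, lintegral form. -/
lemma fkg_lem_A (μ : Measure Ω)
    (hFKG : ∀ A B : Set Ω, MeasurableSet A → MeasurableSet B →
      IsUpperSet A → IsUpperSet B → μ A * μ B ≤ μ (A ∩ B))
    (F : Ω → ℝ) (hFm : Measurable F) (hF : Monotone F) (hF0 : ∀ x, 0 ≤ F x)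
    (B : Set Ω) (hBm : MeasurableSet B) (hB : IsUpperSet B) :
    μ B * ∫⁻ x, ENNReal.ofReal (F x) ∂μ ≤ ∫⁻ x in B, ENNReal.ofReal (F x) ∂μ := by
  rw [lintegral_eq_lintegral_meas_lt μ (Filter.Eventually.of_forall hF0) hFm.aemeasurable,
    lintegral_eq_lintegral_meas_lt (μ.restrict B) (Filter.Eventually.of_forall hF0)
      hFm.aemeasurable]
  have hanti : Antitone fun t : ℝ => μ {a : Ω | t < F a} := fun s t hst =>
    measure_mono fun a ha => lt_of_le_of_lt hst ha
  rw [← lintegral_const_mul _ hanti.measurable]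
  refine lintegral_mono fun t => ?_
  have hmeas : MeasurableSet {a : Ω | t < F a} := measurableSet_lt measurable_const hFm
  rw [Measure.restrict_apply hmeas]
  calc μ B * μ {a : Ω | t < F a} = μ {a : Ω | t < F a} * μ B := mul_comm _ _
    _ ≤ μ ({a : Ω | t < F a} ∩ B) := by
        refine hFKG _ _ hmeas hBm ?_ hB
        intro a b hab ha
        exact lt_of_lt_of_le ha (hF hab)

/-- FKG for two nonneg bounded increasing functions, lintegral form. -/
lemma fkg_lem_B (μ : Measure Ω)
    (hFKG : ∀ A B : Set Ω, MeasurableSet A → MeasurableSet B →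
      IsUpperSet A → IsUpperSet B → μ A * μ B ≤ μ (A ∩ B))
    (F G : Ω → ℝ) (hFm : Measurable F) (hGm : Measurable G)
    (hF : Monotone F) (hG : Monotone G) (hF0 : ∀ x, 0 ≤ F x) (hG0 : ∀ x, 0 ≤ G x) :
    (∫⁻ x, ENNReal.ofReal (F x) ∂μ) * (∫⁻ x, ENNReal.ofReal (G x) ∂μ) ≤
      ∫⁻ x, ENNReal.ofReal (F x) * ENNReal.ofReal (G x) ∂μ := by
  set ν : Measure Ω := μ.withDensity (fun x => ENNReal.ofReal (F x)) with hν
  have hdens : Measurable fun x => ENNReal.ofReal (F x) := hFm.ennreal_ofReal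
  have key : ∫⁻ x, ENNReal.ofReal (F x) * ENNReal.ofReal (G x) ∂μ
      = ∫⁻ x, ENNReal.ofReal (G x) ∂ν := by
    rw [hν, lintegral_withDensity_eq_lintegral_mul μ hdens hGm.ennreal_ofReal]
    rfl
  rw [key, lintegral_eq_lintegral_meas_lt ν (Filter.Eventually.of_forall hG0) hGm.aemeasurable,
    lintegral_eq_lintegral_meas_lt μ (Filter.Eventually.of_forall hG0) hGm.aemeasurable]
  have hanti : Antitone fun t : ℝ => μ {a : Ω | t < G a} := fun s t hst =>
    measure_mono fun a ha => lt_of_le_of_lt hst ha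
  rw [mul_comm, ← lintegral_mul_const _ hanti.measurable]
  refine lintegral_mono fun t => ?_
  have hmeas : MeasurableSet {a : Ω | t < G a} := measurableSet_lt measurable_const hGm
  have hup : IsUpperSet {a : Ω | t < G a} := fun a b hab ha => lt_of_lt_of_le ha (hG hab)
  rw [hν, withDensity_apply _ hmeas]
  exact fkg_lem_A μ hFKG F hFm hF hF0 _ hmeas hup

/-- FKG for two nonneg bounded increasing functions, Bochner integral form. -/
lemma fkg_lem_C (μ : Measure Ω) [IsProbabilityMeasure μ]
    (hFKG : ∀ A B : Set Ω, MeasurableSet A → MeasurableSet B →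
      IsUpperSet A → IsUpperSet B → μ A * μ B ≤ μ (A ∩ B))
    (F G : Ω → ℝ) (hFm : Measurable F) (hGm : Measurable G)
    (hF : Monotone F) (hG : Monotone G) (hF0 : ∀ x, 0 ≤ F x) (hG0 : ∀ x, 0 ≤ G x)
    (C : ℝ) (hFb : ∀ x, F x ≤ C) (hGb : ∀ x, G x ≤ C) :
    (∫ x, F x ∂μ) * (∫ x, G x ∂μ) ≤ ∫ x, F x * G x ∂μ := by
  have hFG0 : ∀ x, 0 ≤ F x * G x := fun x => mul_nonneg (hF0 x) (hG0 x)
  have hIF : ∫ x, F x ∂μ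
      = (∫⁻ x, ENNReal.ofReal (F x) ∂μ).toReal :=
    integral_eq_lintegral_of_nonneg_ae (Filter.Eventually.of_forall hF0)
      hFm.aestronglyMeasurable
  have hIG : ∫ x, G x ∂μ
      = (∫⁻ x, ENNReal.ofReal (G x) ∂μ).toReal :=
    integral_eq_lintegral_of_nonneg_ae (Filter.Eventually.of_forall hG0)
      hGm.aestronglyMeasurable
  have hIFG : ∫ x, F x * G x ∂μ
      = (∫⁻ x, ENNReal.ofReal (F x) * ENNReal.ofReal (G x) ∂μ).toReal := by
    rw [integral_eq_lintegral_of_nonneg_ae (Filter.Eventually.of_forall hFG0)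
      (hFm.mul hGm).aestronglyMeasurable]
    congr 1
    exact lintegral_congr fun x => ENNReal.ofReal_mul (hF0 x)
  have hfin : ∫⁻ x, ENNReal.ofReal (F x) * ENNReal.ofReal (G x) ∂μ ≠ ⊤ := by
    have hb : ∀ x, ENNReal.ofReal (F x) * ENNReal.ofReal (G x)
        ≤ ENNReal.ofReal C * ENNReal.ofReal C := fun x =>
      mul_le_mul' (ENNReal.ofReal_le_ofReal (hFb x)) (ENNReal.ofReal_le_ofReal (hGb x))
    refine ne_top_of_le_ne_top ?_ (lintegral_mono hb)
    rw [lintegral_const, measure_univ, mul_one]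
    exact ENNReal.mul_ne_top ENNReal.ofReal_ne_top ENNReal.ofReal_ne_top
  rw [hIF, hIG, hIFG, ← ENNReal.toReal_mul]
  exact ENNReal.toReal_mono hfin (fkg_lem_B μ hFKG F G hFm hGm hF hG hF0 hG0)

end aux

/-- the FKG inequality for increasing events extends to bounded monotone
functions: for g bounded increasing and f bounded decreasing, ∫ f·g dμ ≤ (∫ f dμ)(∫ g dμ). -/
theorem stmt13 {Ω : Type*} [MeasurableSpace Ω] [PartialOrder Ω]
    (μ : Measure Ω) [IsProbabilityMeasure μ]
    (hFKG : ∀ A B : Set Ω, MeasurableSet A → MeasurableSet B →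
      IsUpperSet A → IsUpperSet B → μ A * μ B ≤ μ (A ∩ B))
    (f g : Ω → ℝ) (hfm : Measurable f) (hgm : Measurable g)
    (hf : Antitone f) (hg : Monotone g)
    (Cf Cg : ℝ) (hfb : ∀ x, |f x| ≤ Cf) (hgb : ∀ x, |g x| ≤ Cg) :
    ∫ x, f x * g x ∂μ ≤ (∫ x, f x ∂μ) * (∫ x, g x ∂μ) := by
  set F : Ω → ℝ := fun x => Cf - f x with hFdef
  set G : Ω → ℝ := fun x => g x + Cg with hGdef
  have hF0 : ∀ x, 0 ≤ F x := fun x => by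
    have := (abs_le.mp (hfb x)).2; simp [hFdef]; linarith
  have hG0 : ∀ x, 0 ≤ G x := fun x => by
    have := (abs_le.mp (hgb x)).1; simp [hGdef]; linarith
  have hFb : ∀ x, F x ≤ Cf + Cg + (Cf + Cg) := fun x => by
    have h1 := (abs_le.mp (hfb x)).1
    have h2 : (0:ℝ) ≤ Cg := le_trans (abs_nonneg _) (hgb x)
    have h3 : (0:ℝ) ≤ Cf := le_trans (abs_nonneg _) (hfb x)
    simp only [hFdef]; linarith
  have hGb : ∀ x, G x ≤ Cf + Cg + (Cf + Cg) := fun x => by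
    have h1 := (abs_le.mp (hgb x)).2
    have h2 : (0:ℝ) ≤ Cg := le_trans (abs_nonneg _) (hgb x)
    have h3 : (0:ℝ) ≤ Cf := le_trans (abs_nonneg _) (hfb x)
    simp only [hGdef]; linarith
  have hFmono : Monotone F := fun a b hab => by
    simp only [hFdef]; linarith [hf hab]
  have hGmono : Monotone G := fun a b hab => by
    simp only [hGdef]; linarith [hg hab]
  have hFm : Measurable F := measurable_const.sub hfm
  have hGm : Measurable G := hgm.add measurable_const
  have key := fkg_lem_C μ hFKG F G hFm hGm hFmono hGmono hF0 hG0 _ hFb hGb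
  -- integrability facts
  have hfint : Integrable f μ :=
    (integrable_const Cf).mono' hfm.aestronglyMeasurable
      (Filter.Eventually.of_forall fun x => by simpa using hfb x)
  have hgint : Integrable g μ :=
    (integrable_const Cg).mono' hgm.aestronglyMeasurable
      (Filter.Eventually.of_forall fun x => by simpa using hgb x)
  have hfgint : Integrable (fun x => f x * g x) μ :=
    (integrable_const (Cf * Cg)).mono' (hfm.mul hgm).aestronglyMeasurable
      (Filter.Eventually.of_forall fun x => by
        have := mul_le_mul (hfb x) (hgb x) (abs_nonneg _)
          (le_trans (abs_nonneg _) (hfb x))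
        simpa [abs_mul] using this)
  have hIF : ∫ x, F x ∂μ = Cf - ∫ x, f x ∂μ := by
    simp only [hFdef]
    rw [integral_sub (integrable_const Cf) hfint, integral_const]
    simp
  have hIG : ∫ x, G x ∂μ = (∫ x, g x ∂μ) + Cg := by
    simp only [hGdef]
    rw [integral_add hgint (integrable_const Cg), integral_const]
    simp
  have hIFG : ∫ x, F x * G x ∂μ
      = Cf * ∫ x, g x ∂μ + Cf * Cg - ∫ x, f x * g x ∂μ - Cg * ∫ x, f x ∂μ := by
    have heq : ∀ x, F x * G x = Cf * g x + Cf * Cg - f x * g x - Cg * f x := fun x => by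
      simp only [hFdef, hGdef]; ring
    rw [integral_congr_ae (Filter.Eventually.of_forall heq)]
    have i1 : Integrable (fun x => Cf * g x) μ := hgint.const_mul Cf
    have i2 : Integrable (fun x => Cf * g x + Cf * Cg) μ := i1.add (integrable_const _)
    have i3 : Integrable (fun x => Cf * g x + Cf * Cg - f x * g x) μ := i2.sub hfgint
    have i4 : Integrable (fun x => Cg * f x) μ := hfint.const_mul Cg
    rw [integral_sub i3 i4, integral_sub i2 hfgint, integral_add i1 (integrable_const _),
      integral_const_mul, integral_const_mul, integral_const]
    simp [integral_const_mul]
  rw [hIF, hIG, hIFG] at key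
  nlinarith [key]
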